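/- Let L be a complete lattice that is an X-top lattice for some nonempty X ⊆ L \ {1}, and equip X with the Zariski-like topology. If X is finite, then the following are equivalent: (1) Max(X) is a retract of X; (2) X has the pm-property; (3) X is a normal topological space. -/

import Mathlib

/-- The set of maximal elements of `X` in the order induced from `L`. -/
def maximalsIn {L : Type*} [CompleteLattice L] (X : Set L) : Set L :=
  {m | m ∈ X ∧ ∀ y ∈ X, m ≤ y → y = m}

/-- From the pm-property we extract a map sending each point to the unique
maximal element above it, with its basic properties. -/
theorem aux_pm_map {L : Type*} [CompleteLattice L] (X : Set L)
    (h2 : ∀ x ∈ X, ∃! m, m ∈ maximalsIn X ∧ x ≤ m) :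
    ∃ r : ↥X → ↥{m : ↥X | (m : L) ∈ maximalsIn X},
      (∀ x : ↥X, (x : L) ≤ ((r x : ↥X) : L)) ∧
      (∀ x y : ↥X, (x : L) ≤ (y : L) → r x = r y) ∧
      (∀ m : ↥{m : ↥X | (m : L) ∈ maximalsIn X}, r ↑m = m) := by
  have hr : ∀ x : ↥X, ∃! m : L, m ∈ maximalsIn X ∧ (x : L) ≤ m := fun x => h2 x x.2
  refine ⟨fun x => ⟨⟨(hr x).choose, (hr x).choose_spec.1.1.1⟩, (hr x).choose_spec.1.1⟩,
    fun x => (hr x).choose_spec.1.2, ?_, ?_⟩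
  · intro x y hxy
    have h1 : ((hr y).choose ∈ maximalsIn X ∧ (x : L) ≤ (hr y).choose) :=
      ⟨(hr y).choose_spec.1.1, le_trans hxy (hr y).choose_spec.1.2⟩
    have := (hr x).choose_spec.2 _ h1
    exact Subtype.ext (Subtype.ext this.symm)
  · intro m
    have h1 : ((m : ↥X) : L) ∈ maximalsIn X ∧ ((m : ↥X) : L) ≤ ((m : ↥X) : L) :=
      ⟨m.2, le_rfl⟩
    have := (hr (m : ↥X)).choose_spec.2 _ h1
    exact Subtype.ext (Subtype.ext this.symm)

theorem stmt_5 {L : Type*} [CompleteLattice L] (X : Set L)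
    (hne : X.Nonempty) (hXtop : ∀ x ∈ X, x ≠ ⊤)
    [TopologicalSpace ↥X]
    (hZar : ∀ C : Set ↥X, IsClosed C ↔ ∃ a : L, C = {x : ↥X | a ≤ (x : L)})
    (hfin : X.Finite) :
    List.TFAE [∃ r : ↥X → ↥{m : ↥X | (m : L) ∈ maximalsIn X},
        Continuous r ∧ ∀ m : ↥{m : ↥X | (m : L) ∈ maximalsIn X}, r ↑m = m,
      ∀ x ∈ X, ∃! m, m ∈ maximalsIn X ∧ x ≤ m,
      NormalSpace ↥X] := by
  have hFin : Finite ↥X := hfin.to_subtype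
  -- closed sets are up-sets
  have hclosed_up : ∀ C : Set ↥X, IsClosed C → ∀ x y : ↥X,
      x ∈ C → (x : L) ≤ (y : L) → y ∈ C := by
    intro C hC x y hx hxy
    obtain ⟨a, rfl⟩ := (hZar C).1 hC
    exact le_trans hx hxy
  -- up-sets are closed (using finiteness)
  have hup_closed : ∀ S : Set ↥X,
      (∀ x y : ↥X, x ∈ S → (x : L) ≤ (y : L) → y ∈ S) → IsClosed S := by
    intro S hS
    have hSeq : S = ⋃ x ∈ S, {y : ↥X | (x : L) ≤ (y : L)} := by
      ext y
      simp only [Set.mem_iUnion, Set.mem_setOf_eq]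
      exact ⟨fun hy => ⟨y, hy, le_rfl⟩, fun ⟨x, hx, hxy⟩ => hS x y hx hxy⟩
    rw [hSeq]
    exact Set.Finite.isClosed_biUnion S.toFinite
      (fun x _ => (hZar _).2 ⟨(x : L), rfl⟩)
  -- every element lies below a maximal one
  have hmax_exists : ∀ x : ↥X, ∃ m : L, m ∈ maximalsIn X ∧ (x : L) ≤ m := by
    intro x
    obtain ⟨m, hm, hmax⟩ := Set.Finite.exists_maximalFor id {y ∈ X | (x : L) ≤ y}
      (hfin.subset (Set.sep_subset _ _)) ⟨(x : L), x.2, le_rfl⟩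
    exact ⟨m, ⟨hm.1, fun y hy hmy => le_antisymm (hmax ⟨hy, le_trans hm.2 hmy⟩ hmy) hmy⟩, hm.2⟩
  tfae_have 2 → 1 := by
    intro h2
    obtain ⟨r, hle, hconst, hretr⟩ := aux_pm_map X h2
    refine ⟨r, ?_, hretr⟩
    rw [continuous_iff_isClosed]
    intro C hC
    obtain ⟨D, hD, rfl⟩ := isClosed_induced_iff.1 hC
    refine hup_closed _ ?_
    intro x y hx hxy
    have : r y = r x := (hconst x y hxy).symm
    simpa [Set.mem_preimage, this] using hx
  tfae_have 1 → 2 := by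
    rintro ⟨r, hcont, hretr⟩ x hx
    set x' : ↥X := ⟨x, hx⟩
    have key : ∀ y : L, y ∈ maximalsIn X → x ≤ y → y = ((r x' : ↥X) : L) := by
      intro y hy hxy
      set y' : ↥X := ⟨y, hy.1⟩
      -- the closed up-set of r x'
      have hD : IsClosed {w : ↥X | ((r x' : ↥X) : L) ≤ (w : L)} :=
        (hZar _).2 ⟨_, rfl⟩
      have hC : IsClosed (r ⁻¹' (Subtype.val ⁻¹'
          {w : ↥X | ((r x' : ↥X) : L) ≤ (w : L)})) :=
        ((hD.preimage continuous_subtype_val).preimage hcont)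
      have hxC : x' ∈ r ⁻¹' (Subtype.val ⁻¹'
          {w : ↥X | ((r x' : ↥X) : L) ≤ (w : L)}) := le_rfl
      have hyC := hclosed_up _ hC x' y' hxC hxy
      have hry : r y' = ⟨y', hy⟩ := hretr ⟨y', hy⟩
      have hle2 : ((r x' : ↥X) : L) ≤ y := by
        have := hyC
        rw [Set.mem_preimage, Set.mem_preimage, hry] at this
        exact this
      exact ((r x').2.2 y hy.1 hle2).symm ▸ rfl
    obtain ⟨m, hm, hxm⟩ := hmax_exists x'
    refine ⟨m, ⟨hm, hxm⟩, ?_⟩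
    rintro y ⟨hy, hxy⟩
    rw [key y hy hxy, key m hm hxm]
  tfae_have 2 → 3 := by
    intro h2
    obtain ⟨r, hle, hconst, hretr⟩ := aux_pm_map X h2
    refine ⟨?_⟩
    intro s t hs ht hst
    refine ⟨r ⁻¹' (r '' s), r ⁻¹' (r '' t), ?_, ?_, ?_, ?_, ?_⟩
    · rw [← isClosed_compl_iff]
      refine hup_closed _ ?_
      intro a b ha hab hb
      exact ha (by rwa [Set.mem_preimage, hconst a b hab])
    · rw [← isClosed_compl_iff]
      refine hup_closed _ ?_
      intro a b ha hab hb
      exact ha (by rwa [Set.mem_preimage, hconst a b hab])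
    · exact fun z hz => ⟨z, hz, rfl⟩
    · exact fun z hz => ⟨z, hz, rfl⟩
    · rw [Set.disjoint_left]
      rintro z ⟨a, ha, haz⟩ ⟨b, hb, hbz⟩
      have hab : r a = r b := by rw [haz, hbz]
      have haS : (r a : ↥X) ∈ s := hclosed_up s hs a (r a) ha (hle a)
      have hbT : (r b : ↥X) ∈ t := hclosed_up t ht b (r b) hb (hle b)
      rw [hab] at haS
      exact Set.disjoint_left.1 hst haS hbT
  tfae_have 3 → 2 := by
    intro hnorm x hx
    set x' : ↥X := ⟨x, hx⟩
    obtain ⟨m, hm, hxm⟩ := hmax_exists x'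
    refine ⟨m, ⟨hm, hxm⟩, ?_⟩
    rintro y ⟨hy, hxy⟩
    by_contra hne'
    set m' : ↥X := ⟨m, hm.1⟩
    set y' : ↥X := ⟨y, hy.1⟩
    have hclm : IsClosed ({m'} : Set ↥X) := by
      refine hup_closed _ ?_
      intro a b ha hab
      rw [Set.mem_singleton_iff] at ha ⊢
      subst ha
      exact Subtype.ext (hm.2 _ b.2 hab)
    have hcly : IsClosed ({y'} : Set ↥X) := by
      refine hup_closed _ ?_
      intro a b ha hab
      rw [Set.mem_singleton_iff] at ha ⊢
      subst ha
      exact Subtype.ext (hy.2 _ b.2 hab)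
    have hdisj : Disjoint ({y'} : Set ↥X) ({m'} : Set ↥X) := by
      rw [Set.disjoint_singleton_left, Set.mem_singleton_iff]
      exact fun h => hne' (congrArg Subtype.val h)
    obtain ⟨U, V, hU, hV, hyU, hmV, hUV⟩ := hnorm.normal _ _ hcly hclm hdisj
    have hxU : x' ∈ U := by
      by_contra hxU
      have : y' ∈ Uᶜ := hclosed_up _ (hU.isClosed_compl) x' y' hxU hxy
      exact this (hyU rfl)
    have hxV : x' ∈ V := by
      by_contra hxV
      have : m' ∈ Vᶜ := hclosed_up _ (hV.isClosed_compl) x' m' hxV hxm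
      exact this (hmV rfl)
    exact Set.disjoint_left.1 hUV hxU hxV
  tfae_finish
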